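/- arXiv:0711.2642 — 2 statements merged into one kernel-verified Lean document; each statement's English description precedes it below -/
import Mathlib

section
/- Let X be a nonnegative real-valued random variable with E[X] = 1. Then for any A > 0 and any λ ∈ [0,1], E[log(1 + X·A)] ≤ E[log(1 + (λ + (1-λ)X)·A)]. -/
open MeasureTheory Real

/-- If `X ≥ 0` with `E[X] = 1`, then for `A > 0` and `λ ∈ [0,1]`,
`E[log(1 + X A)] ≤ E[log(1 + (λ + (1-λ)X) A)]`. -/
theorem rate_gap_little_lemma
    {Ω : Type*} [MeasurableSpace Ω] (μ : Measure Ω) [IsProbabilityMeasure μ]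
    (X : Ω → ℝ) (hX_nonneg : ∀ ω, 0 ≤ X ω) (hX_int : Integrable X μ)
    (hX_mean : ∫ ω, X ω ∂μ = 1)
    (A : ℝ) (hA : 0 < A) (lam : ℝ) (hlam : lam ∈ Set.Icc (0 : ℝ) 1)
    (h_int₁ : Integrable (fun ω => Real.log (1 + X ω * A)) μ)
    (h_int₂ : Integrable (fun ω => Real.log (1 + (lam + (1 - lam) * X ω) * A)) μ) :
    ∫ ω, Real.log (1 + X ω * A) ∂μ
      ≤ ∫ ω, Real.log (1 + (lam + (1 - lam) * X ω) * A) ∂μ := by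
  obtain ⟨hl0, hl1⟩ := hlam
  have hApos : (0:ℝ) < 1 + A := by linarith
  have hpos : ∀ ω, (0:ℝ) < 1 + X ω * A := fun ω => by
    have := mul_nonneg (hX_nonneg ω) hA.le; linarith
  -- Step 1: E[log(1+XA)] ≤ log(1+A)
  have hlin_int : Integrable (fun ω => Real.log (1 + A) + (X ω * A - A) / (1 + A)) μ := by
    apply Integrable.add (integrable_const _)
    simpa [div_eq_mul_inv, sub_mul] using
      (((hX_int.mul_const A).sub (integrable_const A)).mul_const (1 + A)⁻¹)
  have step1 : ∫ ω, Real.log (1 + X ω * A) ∂μ ≤ Real.log (1 + A) := by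
    have hmono : ∫ ω, Real.log (1 + X ω * A) ∂μ
        ≤ ∫ ω, (Real.log (1 + A) + (X ω * A - A) / (1 + A)) ∂μ := by
      refine integral_mono h_int₁ hlin_int fun ω => ?_
      have h := Real.log_le_sub_one_of_pos (x := (1 + X ω * A) / (1 + A))
        (div_pos (hpos ω) hApos)
      rw [Real.log_div (hpos ω).ne' hApos.ne'] at h
      have : (1 + X ω * A) / (1 + A) - 1 = (X ω * A - A) / (1 + A) := by
        field_simp
        ring
      linarith [this ▸ h]
    have hcalc : ∫ ω, (Real.log (1 + A) + (X ω * A - A) / (1 + A)) ∂μ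
        = Real.log (1 + A) := by
      rw [integral_add (integrable_const _) (by
        simpa [div_eq_mul_inv, sub_mul] using
          (((hX_int.mul_const A).sub (integrable_const A)).mul_const (1 + A)⁻¹))]
      simp only [integral_const, measure_univ, ENNReal.toReal_one, one_smul]
      have : ∫ ω, (X ω * A - A) / (1 + A) ∂μ
          = ((∫ ω, X ω ∂μ) * A - A) / (1 + A) := by
        simp only [div_eq_mul_inv, sub_mul]
        rw [integral_sub ((hX_int.mul_const A).mul_const (1 + A)⁻¹)
          (integrable_const _), integral_const]
        simp [integral_mul_const, mul_assoc]
      rw [this, hX_mean]; simp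
    linarith [hcalc ▸ hmono]
  -- Step 2: pointwise concavity
  have step2 : ∫ ω, (lam * Real.log (1 + A) + (1 - lam) * Real.log (1 + X ω * A)) ∂μ
      ≤ ∫ ω, Real.log (1 + (lam + (1 - lam) * X ω) * A) ∂μ := by
    refine integral_mono ((integrable_const _).add (h_int₁.const_mul _)) h_int₂ fun ω => ?_
    have hc := strictConcaveOn_log_Ioi.concaveOn.2 (Set.mem_Ioi.2 hApos)
      (Set.mem_Ioi.2 (hpos ω)) hl0 (show (0:ℝ) ≤ 1 - lam by linarith)
      (show lam + (1 - lam) = 1 by ring)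
    have heq : lam • (1 + A) + (1 - lam) • (1 + X ω * A)
        = 1 + (lam + (1 - lam) * X ω) * A := by simp [smul_eq_mul]; ring
    rw [heq] at hc
    simpa [smul_eq_mul] using hc
  have hcalc2 : ∫ ω, (lam * Real.log (1 + A) + (1 - lam) * Real.log (1 + X ω * A)) ∂μ
      = lam * Real.log (1 + A) + (1 - lam) * ∫ ω, Real.log (1 + X ω * A) ∂μ := by
    rw [integral_add (integrable_const _) (h_int₁.const_mul _), integral_const,
      integral_const_mul]
    simp
  have : ∫ ω, Real.log (1 + X ω * A) ∂μ
      ≤ lam * Real.log (1 + A) + (1 - lam) * ∫ ω, Real.log (1 + X ω * A) ∂μ := by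
    nlinarith [step1]
  linarith [hcalc2 ▸ step2]
end

section
/- For all integers M ≥ 2 and B ≥ 0, we have 2^B · Beta(2^B, M/(M-1)) ≤ 2^(-B/(M-1)), where Beta(x,y) = Γ(x)Γ(y)/Γ(x+y) is the Beta function. -/
open Real

/-- Euler's Beta function `B(x,y) = Γ(x)Γ(y)/Γ(x+y)`. -/
noncomputable def betaFn (x y : ℝ) : ℝ := Real.Gamma x * Real.Gamma y / Real.Gamma (x + y)

lemma gamma_nat_add (t : ℝ) (ht : 0 < t) (K : ℕ) :
    Real.Gamma ((K : ℝ) + t) = (∏ j ∈ Finset.range K, ((j : ℝ) + t)) * Real.Gamma t := by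
  induction K with
  | zero => simp
  | succ n ih =>
    have hne : (n : ℝ) + t ≠ 0 := by positivity
    have : ((n + 1 : ℕ) : ℝ) + t = ((n : ℝ) + t) + 1 := by push_cast; ring
    rw [this, Real.Gamma_add_one hne, ih, Finset.prod_range_succ]
    ring

lemma telescope (K : ℕ) :
    (∏ j ∈ Finset.range K, (1 + 1 / ((j : ℝ) + 1))) = (K : ℝ) + 1 := by
  induction K with
  | zero => simp
  | succ n ih =>
    rw [Finset.prod_range_succ, ih]
    have h : (n : ℝ) + 1 ≠ 0 := by positivity
    field_simp
    norm_num

lemma key (t : ℝ) (ht0 : 0 < t) (ht1 : t ≤ 1) (K : ℕ) :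
    (K : ℝ) * betaFn K (1 + t) ≤ (K : ℝ) ^ (-t) := by
  rcases Nat.eq_zero_or_pos K with hK | hK
  · subst hK
    simpa [betaFn] using Real.rpow_nonneg (le_refl (0:ℝ)) (-t)
  have hKR : (0 : ℝ) < K := by exact_mod_cast hK
  -- product lower bound
  have hprod : (K : ℝ) ^ t ≤ ∏ j ∈ Finset.range K, (1 + t / ((j : ℝ) + 1)) := by
    have h1 : ((K : ℝ) + 1) ^ t = ∏ j ∈ Finset.range K, (1 + 1 / ((j : ℝ) + 1)) ^ t := by
      rw [Real.finset_prod_rpow _ _ (fun i _ => by positivity), telescope]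
    have h2 : ∀ j ∈ Finset.range K, (1 + 1 / ((j : ℝ) + 1)) ^ t ≤ 1 + t / ((j : ℝ) + 1) := by
      intro j _
      have h0 : (0:ℝ) ≤ 1 / ((j : ℝ) + 1) := by positivity
      have := rpow_one_add_le_one_add_mul_self (s := 1 / ((j : ℝ) + 1))
        (by linarith) ht0.le ht1
      simpa [mul_one_div, div_eq_mul_inv] using this
    calc (K : ℝ) ^ t ≤ ((K : ℝ) + 1) ^ t :=
          Real.rpow_le_rpow hKR.le (by linarith) ht0.le
      _ = ∏ j ∈ Finset.range K, (1 + 1 / ((j : ℝ) + 1)) ^ t := h1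
      _ ≤ ∏ j ∈ Finset.range K, (1 + t / ((j : ℝ) + 1)) :=
          Finset.prod_le_prod (fun i _ => by positivity) h2
  -- compute K * betaFn K (1+t)
  have hGt : (0 : ℝ) < Real.Gamma (1 + t) := Real.Gamma_pos_of_pos (by linarith)
  have hGK : Real.Gamma ((K : ℝ) + (1 + t))
      = (∏ j ∈ Finset.range K, ((j : ℝ) + (1 + t))) * Real.Gamma (1 + t) :=
    gamma_nat_add (1 + t) (by linarith) K
  have hKfac : (K : ℝ) * Real.Gamma K = ∏ j ∈ Finset.range K, ((j : ℝ) + 1) := by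
    have h1 : (K : ℝ) * Real.Gamma K = Real.Gamma ((K : ℝ) + 1) :=
      (Real.Gamma_add_one hKR.ne').symm
    rw [h1, show (K : ℝ) + 1 = (K : ℝ) + (1:ℝ) from rfl, gamma_nat_add 1 one_pos K,
      Real.Gamma_one, mul_one]
  have hLHS : (K : ℝ) * betaFn K (1 + t)
      = ∏ j ∈ Finset.range K, (((j : ℝ) + 1) / ((j : ℝ) + (1 + t))) := by
    unfold betaFn
    rw [Finset.prod_div_distrib, hGK]
    rw [show (K:ℝ) * (Real.Gamma K * Real.Gamma (1+t) / ((∏ j ∈ Finset.range K, ((j:ℝ)+(1+t))) * Real.Gamma (1+t)))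
        = ((K:ℝ) * Real.Gamma K) * (Real.Gamma (1+t) / Real.Gamma (1+t)) / (∏ j ∈ Finset.range K, ((j:ℝ)+(1+t))) by ring]
    rw [div_self hGt.ne', mul_one, hKfac]
  rw [hLHS, Real.rpow_neg hKR.le, Finset.prod_div_distrib]
  have hden : (0 : ℝ) < ∏ j ∈ Finset.range K, ((j : ℝ) + (1 + t)) :=
    Finset.prod_pos (fun i _ => by positivity)
  have hKt : (0:ℝ) < (K:ℝ) ^ t := Real.rpow_pos_of_pos hKR t
  rw [div_le_iff₀ hden, inv_mul_eq_div, le_div_iff₀ hKt]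
  calc (∏ j ∈ Finset.range K, ((j:ℝ) + 1)) * (K:ℝ) ^ t
      ≤ (∏ j ∈ Finset.range K, ((j:ℝ) + 1)) * ∏ j ∈ Finset.range K, (1 + t / ((j:ℝ) + 1)) :=
        mul_le_mul_of_nonneg_left hprod (Finset.prod_nonneg (fun i _ => by positivity))
    _ = ∏ j ∈ Finset.range K, (((j:ℝ) + 1) * (1 + t / ((j:ℝ) + 1))) :=
        (Finset.prod_mul_distrib).symm
    _ = ∏ j ∈ Finset.range K, ((j:ℝ) + (1 + t)) := by
        refine Finset.prod_congr rfl (fun j _ => ?_)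
        have h : (j:ℝ) + 1 ≠ 0 := by positivity
        field_simp
        ring

/-- RVQ distortion bound: for integers `M ≥ 2` and `B ≥ 0`,
`2^B · Beta(2^B, M/(M-1)) ≤ 2^(-B/(M-1))`. -/
theorem rvq_distortion_bound (M B : ℕ) (hM : 2 ≤ M) :
    (2 : ℝ) ^ B * betaFn ((2 : ℝ) ^ B) ((M : ℝ) / ((M : ℝ) - 1))
      ≤ (2 : ℝ) ^ (-(B : ℝ) / ((M : ℝ) - 1)) := by
  have hM1 : (1 : ℝ) ≤ (M : ℝ) - 1 := by
    have : (2 : ℝ) ≤ (M : ℝ) := by exact_mod_cast hM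
    linarith
  set t : ℝ := 1 / ((M : ℝ) - 1) with ht
  have ht0 : 0 < t := by positivity
  have ht1 : t ≤ 1 := by
    rw [ht, div_le_one (by linarith)]; linarith
  have hMt : (M : ℝ) / ((M : ℝ) - 1) = 1 + t := by
    rw [ht]; field_simp; ring
  have hKcast : ((2 ^ B : ℕ) : ℝ) = (2 : ℝ) ^ B := by push_cast; ring
  have := key t ht0 ht1 (2 ^ B)
  rw [hKcast, ← hMt] at this
  refine this.trans_eq ?_
  rw [← Real.rpow_natCast (2:ℝ) B, ← Real.rpow_mul (by norm_num : (0:ℝ) ≤ 2)]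
  congr 1
  rw [ht]; field_simp
end
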